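/- Let F be a field and suppose ρ₁ : G → GL_{n₁}(F), ρ₂ : G → GL_{n₂}(F) are group homomorphisms such that no irreducible constituent of the semisimplification of ρ₁ is isomorphic to any irreducible constituent of the semisimplification of ρ₂, ρ₁ is semisimple, and both ρ₁ and ρ₂ have scalar centralizer. If the block upper-triangular representation σ(g) = [[ρ₁(g), f(g)],[0, ρ₂(g)]] is isomorphic to ρ₁ ⊕ ρ₂, then there exists a block matrix M = [[I_{n₁}, B],[0, I_{n₂}]] in GL_{n₁+n₂}(F) such that M σ(g) M⁻¹ = [[ρ₁(g), 0],[0, ρ₂(g)]] for all g in G. -/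

import Mathlib

open Matrix

/-- The representation on `Fin n → F` attached to a homomorphism `G → GL_n(F)`. -/
noncomputable def matrixRep {F : Type*} [Field F] {G : Type*} [Group G] {n : ℕ}
    (ρ : G →* GL (Fin n) F) : Representation F G (Fin n → F) :=
  (Matrix.toLinAlgEquiv'.toRingEquiv.toRingHom.toMonoidHom).comp
    ((Units.coeHom (Matrix (Fin n) (Fin n) F)).comp ρ)

/-- The underlying space `Fin n → F` of `ρ : G → GL_n(F)`, viewed as a module over the
group algebra `F[G]`. -/
def RepMod {F : Type*} [Field F] {G : Type*} [Group G] {n : ℕ}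
    (_ρ : G →* GL (Fin n) F) : Type _ := Fin n → F

instance {F : Type*} [Field F] {G : Type*} [Group G] {n : ℕ} (ρ : G →* GL (Fin n) F) :
    AddCommGroup (RepMod ρ) := inferInstanceAs (AddCommGroup (Fin n → F))

noncomputable instance {F : Type*} [Field F] {G : Type*} [Group G] {n : ℕ}
    (ρ : G →* GL (Fin n) F) : Module (MonoidAlgebra F G) (RepMod ρ) :=
  Module.compHom (Fin n → F) (Representation.asAlgebraHom (matrixRep ρ)).toRingHom

section Aux
variable {F : Type*} [Field F] {G : Type*} [Group G] {n₁ n₂ : ℕ}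

/-- The `F[G]`-linear map attached to an intertwining matrix. -/
noncomputable def interMap (ρ₁ : G →* GL (Fin n₁) F) (ρ₂ : G →* GL (Fin n₂) F)
    (C : Matrix (Fin n₂) (Fin n₁) F)
    (hC : ∀ g, C * (ρ₁ g : Matrix (Fin n₁) (Fin n₁) F) =
      (ρ₂ g : Matrix (Fin n₂) (Fin n₂) F) * C) :
    RepMod ρ₁ →ₗ[MonoidAlgebra F G] RepMod ρ₂ where
  toFun x := C.mulVec x
  map_add' x y := Matrix.mulVec_add C x y
  map_smul' a x := by
    show C.mulVec (Representation.asAlgebraHom (matrixRep ρ₁) a (x : Fin n₁ → F))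
      = Representation.asAlgebraHom (matrixRep ρ₂) a (C.mulVec x)
    induction a using MonoidAlgebra.induction_linear with
    | zero => exact Matrix.mulVec_zero C
    | add a b ha hb => rw [map_add, map_add]; exact (Matrix.mulVec_add C _ _).trans (congrArg₂ (· + ·) ha hb)
    | single g r =>
      simp only [Representation.asAlgebraHom_single, LinearMap.smul_apply,
        Matrix.mulVec_smul]
      change C *ᵥ (r • (matrixRep ρ₁ g (show Fin n₁ → F from x))) = r • (matrixRep ρ₂ g (C *ᵥ x))
      rw [Matrix.mulVec_smul]
      congr 1
      show C.mulVec ((ρ₁ g : Matrix (Fin n₁) (Fin n₁) F).mulVec (show Fin n₁ → F from x))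
        = (ρ₂ g : Matrix (Fin n₂) (Fin n₂) F).mulVec (C.mulVec (show Fin n₁ → F from x))
      rw [Matrix.mulVec_mulVec, Matrix.mulVec_mulVec, hC]

set_option synthInstance.maxHeartbeats 1000000 in
set_option maxHeartbeats 1000000 in
lemma intertwiner_eq_zero (ρ₁ : G →* GL (Fin n₁) F) (ρ₂ : G →* GL (Fin n₂) F)
    (hss : IsSemisimpleModule (MonoidAlgebra F G) (RepMod ρ₁))
    (hdisj : ∀ (p q : Submodule (MonoidAlgebra F G) (RepMod ρ₁))
      (p' q' : Submodule (MonoidAlgebra F G) (RepMod ρ₂)),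
      IsSimpleModule (MonoidAlgebra F G) (↥q ⧸ Submodule.comap q.subtype p) →
      IsSimpleModule (MonoidAlgebra F G) (↥q' ⧸ Submodule.comap q'.subtype p') →
      IsEmpty ((↥q ⧸ Submodule.comap q.subtype p) ≃ₗ[MonoidAlgebra F G]
        (↥q' ⧸ Submodule.comap q'.subtype p')))
    (C : Matrix (Fin n₂) (Fin n₁) F)
    (hC : ∀ g, C * (ρ₁ g : Matrix (Fin n₁) (Fin n₁) F) =
      (ρ₂ g : Matrix (Fin n₂) (Fin n₂) F) * C) : C = 0 := by
  by_contra hne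
  set R := MonoidAlgebra F G
  set φ := interMap ρ₁ ρ₂ C hC with hφ
  -- the range of φ is nontrivial
  have hrange : LinearMap.range φ ≠ ⊥ := by
    intro h
    apply hne
    have h0 : ∀ x : Fin n₁ → F, C.mulVec x = 0 := by
      intro x
      have : φ (x : RepMod ρ₁) ∈ LinearMap.range φ := ⟨x, rfl⟩
      rw [h, Submodule.mem_bot] at this
      exact this
    have : Matrix.toLin' C = Matrix.toLin' (0 : Matrix (Fin n₂) (Fin n₁) F) := by
      ext x
      simp [Matrix.toLin'_apply, h0]
    exact Matrix.toLin'.injective this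
  -- range φ is a semisimple module
  haveI : IsSemisimpleModule R (RepMod ρ₁) := hss
  haveI : IsSemisimpleModule R ↥(LinearMap.range φ) := IsSemisimpleModule.range φ
  -- pick a simple submodule S₀ of range φ
  haveI hcl : ComplementedLattice (Submodule R ↥(LinearMap.range φ)) :=
    (IsSemisimpleModule.range φ).toComplementedLattice
  haveI : IsAtomistic (Submodule R ↥(LinearMap.range φ)) :=
    isAtomistic_of_complementedLattice
  haveI : IsAtomic (Submodule R ↥(LinearMap.range φ)) := inferInstance
  obtain (h | ⟨S₀, hS₀atom, -⟩) :=
    (IsAtomic.eq_bot_or_exists_atom_le (⊤ : Submodule R ↥(LinearMap.range φ)))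
  · refine hrange ((Submodule.eq_bot_iff _).mpr fun x hx => ?_)
    have hx' : (⟨x, hx⟩ : ↥(LinearMap.range φ)) ∈ (⊤ : Submodule R ↥(LinearMap.range φ)) :=
      trivial
    rw [h, Submodule.mem_bot] at hx'
    exact congrArg Subtype.val hx'
  -- S₀ is simple; push it forward to a submodule S of RepMod ρ₂
  haveI hS₀ : IsSimpleModule R ↥S₀ := (isSimpleModule_iff_isAtom (m := S₀)).mpr hS₀atom
  set S : Submodule R (RepMod ρ₂) := S₀.map (LinearMap.range φ).subtype with hSdef
  have eS : ↥S₀ ≃ₗ[R] ↥S :=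
    Submodule.equivMapOfInjective _ (Submodule.injective_subtype _) S₀
  haveI hS : IsSimpleModule R ↥S := IsSimpleModule.congr (N := ↥S₀) eS.symm
  have hSle : S ≤ LinearMap.range φ := Submodule.map_subtype_le _ S₀
  -- on the ρ₁ side: q = φ⁻¹(S), p = ker φ
  set q : Submodule R (RepMod ρ₁) := Submodule.comap φ S with hq
  set p : Submodule R (RepMod ρ₁) := LinearMap.ker φ with hp
  have hmem : ∀ x ∈ q, φ x ∈ S := fun x hx => hx
  set ψ : ↥q →ₗ[R] ↥S := φ.restrict hmem with hψ
  have hψsurj : Function.Surjective ψ := by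
    rintro ⟨s, hs⟩
    obtain ⟨x, hx⟩ := hSle hs
    refine ⟨⟨x, ?_⟩, ?_⟩
    · show φ x ∈ S; rw [hx]; exact hs
    · apply Subtype.ext; show φ x = s; exact hx
  have hker : LinearMap.ker ψ = Submodule.comap q.subtype p := by
    ext x
    constructor
    · intro hx
      have : φ (x : RepMod ρ₁) = 0 := congrArg Subtype.val hx
      exact this
    · intro hx
      apply Subtype.ext
      exact (hx : φ (x : RepMod ρ₁) = 0)
  have e₁ : (↥q ⧸ Submodule.comap q.subtype p) ≃ₗ[R] ↥S := by
    rw [← hker]; exact LinearMap.quotKerEquivOfSurjective ψ hψsurj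
  -- on the ρ₂ side: q' = S, p' = ⊥
  have hcomapbot : Submodule.comap S.subtype (⊥ : Submodule R (RepMod ρ₂)) = ⊥ := by
    rw [Submodule.comap_bot, Submodule.ker_subtype]
  have e₂ : (↥S ⧸ Submodule.comap S.subtype (⊥ : Submodule R (RepMod ρ₂))) ≃ₗ[R] ↥S :=
    Submodule.quotEquivOfEqBot _ hcomapbot
  haveI h₁ : IsSimpleModule R (↥q ⧸ Submodule.comap q.subtype p) := IsSimpleModule.congr e₁
  haveI h₂ : IsSimpleModule R (↥S ⧸ Submodule.comap S.subtype (⊥ : Submodule R (RepMod ρ₂))) :=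
    IsSimpleModule.congr e₂
  exact (hdisj p q ⊥ S h₁ h₂).false (e₁.trans e₂.symm)

end Aux

/-- Let `ρ₁, ρ₂` be matrix representations of a group `G` over a field
`F` such that `ρ₁` is semisimple, no irreducible constituent of (the semisimplification
of) `ρ₁` is isomorphic to an irreducible constituent of the semisimplification of `ρ₂`,
and both `ρ₁, ρ₂` have scalar centralizer.  If the block upper-triangular representation
`σ(g) = [[ρ₁(g), f(g)],[0, ρ₂(g)]]` is isomorphic to `ρ₁ ⊕ ρ₂`, then there is a matrix
`M = [[I, B],[0, I]]` conjugating `σ` to the block-diagonal `ρ₁ ⊕ ρ₂`. -/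

theorem split_by_unipotent_of_isomorphic_to_sum
    {F : Type*} [Field F] {G : Type*} [Group G] {n₁ n₂ : ℕ}
    (ρ₁ : G →* GL (Fin n₁) F) (ρ₂ : G →* GL (Fin n₂) F)
    (f : G → Matrix (Fin n₁) (Fin n₂) F)
    (σ : G →* Matrix (Fin n₁ ⊕ Fin n₂) (Fin n₁ ⊕ Fin n₂) F)
    (hσ : ∀ g, σ g = Matrix.fromBlocks (ρ₁ g : Matrix (Fin n₁) (Fin n₁) F) (f g) 0
      (ρ₂ g : Matrix (Fin n₂) (Fin n₂) F))
    -- `ρ₁` is semisimple: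
    (hss : IsSemisimpleModule (MonoidAlgebra F G) (RepMod ρ₁))
    -- no irreducible constituent of `ρ₁^ss` is isomorphic to one of `ρ₂^ss`:
    (hdisj : ∀ (p q : Submodule (MonoidAlgebra F G) (RepMod ρ₁))
      (p' q' : Submodule (MonoidAlgebra F G) (RepMod ρ₂)),
      IsSimpleModule (MonoidAlgebra F G) (↥q ⧸ Submodule.comap q.subtype p) →
      IsSimpleModule (MonoidAlgebra F G) (↥q' ⧸ Submodule.comap q'.subtype p') →
      IsEmpty ((↥q ⧸ Submodule.comap q.subtype p) ≃ₗ[MonoidAlgebra F G]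
        (↥q' ⧸ Submodule.comap q'.subtype p')))
    -- `ρ₁` and `ρ₂` have scalar centralizer:
    (hc₁ : ∀ C : Matrix (Fin n₁) (Fin n₁) F,
      (∀ g, C * (ρ₁ g : Matrix (Fin n₁) (Fin n₁) F) =
        (ρ₁ g : Matrix (Fin n₁) (Fin n₁) F) * C) → ∃ s : F, C = s • 1)
    (hc₂ : ∀ C : Matrix (Fin n₂) (Fin n₂) F,
      (∀ g, C * (ρ₂ g : Matrix (Fin n₂) (Fin n₂) F) =
        (ρ₂ g : Matrix (Fin n₂) (Fin n₂) F) * C) → ∃ s : F, C = s • 1)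
    -- `σ` is isomorphic to `ρ₁ ⊕ ρ₂`:
    (hiso : ∃ P : Matrix (Fin n₁ ⊕ Fin n₂) (Fin n₁ ⊕ Fin n₂) F, IsUnit P ∧
      ∀ g, P * σ g = Matrix.fromBlocks (ρ₁ g : Matrix (Fin n₁) (Fin n₁) F) 0 0
        (ρ₂ g : Matrix (Fin n₂) (Fin n₂) F) * P) :
    ∃ B : Matrix (Fin n₁) (Fin n₂) F,
      ∀ g, Matrix.fromBlocks 1 B 0 1 * σ g =
        Matrix.fromBlocks (ρ₁ g : Matrix (Fin n₁) (Fin n₁) F) 0 0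
          (ρ₂ g : Matrix (Fin n₂) (Fin n₂) F) * Matrix.fromBlocks 1 B 0 1 := by
  -- reduce to the top-right block equation
  suffices h : ∃ B : Matrix (Fin n₁) (Fin n₂) F,
      ∀ g, f g + B * (ρ₂ g : Matrix (Fin n₂) (Fin n₂) F) =
        (ρ₁ g : Matrix (Fin n₁) (Fin n₁) F) * B by
    obtain ⟨B, hB⟩ := h
    refine ⟨B, fun g => ?_⟩
    rw [hσ g, Matrix.fromBlocks_multiply, Matrix.fromBlocks_multiply]
    simp only [Matrix.one_mul, Matrix.mul_one, Matrix.zero_mul, Matrix.mul_zero,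
      Matrix.one_mul, add_zero, zero_add, Matrix.zero_mul]
    rw [hB g]
  obtain ⟨P, hP, hPcomm⟩ := hiso
  set A := P.toBlocks₁₁ with hA
  set B₀ := P.toBlocks₁₂ with hB₀
  set C := P.toBlocks₂₁ with hCdef
  set D := P.toBlocks₂₂ with hD
  have hPb : P = Matrix.fromBlocks A B₀ C D := (Matrix.fromBlocks_toBlocks P).symm
  have key : ∀ g, Matrix.fromBlocks
      (A * (ρ₁ g : Matrix (Fin n₁) (Fin n₁) F))
      (A * f g + B₀ * (ρ₂ g : Matrix (Fin n₂) (Fin n₂) F))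
      (C * (ρ₁ g : Matrix (Fin n₁) (Fin n₁) F))
      (C * f g + D * (ρ₂ g : Matrix (Fin n₂) (Fin n₂) F))
      = Matrix.fromBlocks ((ρ₁ g : Matrix (Fin n₁) (Fin n₁) F) * A)
        ((ρ₁ g : Matrix (Fin n₁) (Fin n₁) F) * B₀)
        ((ρ₂ g : Matrix (Fin n₂) (Fin n₂) F) * C)
        ((ρ₂ g : Matrix (Fin n₂) (Fin n₂) F) * D) := by
    intro g
    have h := hPcomm g
    rw [hσ g, hPb, Matrix.fromBlocks_multiply, Matrix.fromBlocks_multiply] at h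
    simpa only [Matrix.mul_zero, Matrix.zero_mul, add_zero, zero_add] using h
  have keyTL : ∀ g, A * (ρ₁ g : Matrix (Fin n₁) (Fin n₁) F) =
      (ρ₁ g : Matrix (Fin n₁) (Fin n₁) F) * A := fun g => by
    simpa using congrArg Matrix.toBlocks₁₁ (key g)
  have keyTR : ∀ g, A * f g + B₀ * (ρ₂ g : Matrix (Fin n₂) (Fin n₂) F) =
      (ρ₁ g : Matrix (Fin n₁) (Fin n₁) F) * B₀ := fun g => by
    simpa using congrArg Matrix.toBlocks₁₂ (key g)
  have keyBL : ∀ g, C * (ρ₁ g : Matrix (Fin n₁) (Fin n₁) F) =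
      (ρ₂ g : Matrix (Fin n₂) (Fin n₂) F) * C := fun g => by
    simpa using congrArg Matrix.toBlocks₂₁ (key g)
  have hC : C = 0 := intertwiner_eq_zero ρ₁ ρ₂ hss hdisj C keyBL
  obtain ⟨s, hAs⟩ := hc₁ A keyTL
  -- A is invertible
  have hdet : IsUnit (A.det * D.det) := by
    have := (Matrix.isUnit_iff_isUnit_det P).mp hP
    rwa [hPb, hC, Matrix.det_fromBlocks_zero₂₁] at this
  have hAdet : IsUnit A.det := isUnit_of_mul_isUnit_left hdet
  rcases Nat.eq_zero_or_pos n₁ with hn | hn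
  · subst hn
    exact ⟨0, fun g => Subsingleton.elim _ _⟩
  · have hs : s ≠ 0 := by
      intro h0
      rw [hAs, h0, zero_smul] at hAdet
      haveI := Fin.pos_iff_nonempty.mp hn
      simp only [Matrix.det_zero, isUnit_zero_iff] at hAdet
      exact one_ne_zero hAdet.symm
    refine ⟨s⁻¹ • B₀, fun g => ?_⟩
    have h := keyTR g
    rw [hAs, Matrix.smul_mul, Matrix.one_mul] at h
    calc f g + (s⁻¹ • B₀) * (ρ₂ g : Matrix (Fin n₂) (Fin n₂) F)
        = s⁻¹ • (s • f g + B₀ * (ρ₂ g : Matrix (Fin n₂) (Fin n₂) F)) := by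
          rw [smul_add, smul_smul, inv_mul_cancel₀ hs, one_smul, Matrix.smul_mul]
      _ = s⁻¹ • ((ρ₁ g : Matrix (Fin n₁) (Fin n₁) F) * B₀) := by rw [h]
      _ = (ρ₁ g : Matrix (Fin n₁) (Fin n₁) F) * (s⁻¹ • B₀) := by
          rw [Matrix.mul_smul]
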